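/- Let Φ be a CM type of K, i.e., a set of field embeddings K → ℂ containing, for each embedding σ of K, exactly one of σ and its complex conjugate. Then there exists ζ ∈ K with ρ(ζ) = −ζ and Im(σ(ζ)) > 0 for every σ ∈ Φ, where ρ is the nontrivial F-automorphism of K. -/

import Mathlib

open NumberField

-- every embedding of a totally real field is real-valued
lemma aux_real (F : Type*) [Field F] [NumberField F]
    (hF : ∀ v : InfinitePlace F, v.IsReal) (τ : F →+* ℂ) :
    ComplexEmbedding.IsReal τ :=
  InfinitePlace.isReal_mk_iff.mp (hF (InfinitePlace.mk τ))

-- extension dichotomy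
lemma aux_dichotomy (F K : Type*) [Field F] [Field K] [NumberField F] [NumberField K] [Algebra F K]
    (hF : ∀ v : InfinitePlace F, v.IsReal)
    (hK : ∀ v : InfinitePlace K, v.IsComplex)
    (hdeg : Module.finrank F K = 2)
    (σ₁ σ₂ : K →+* ℂ)
    (h : σ₁.comp (algebraMap F K) = σ₂.comp (algebraMap F K)) :
    σ₂ = σ₁ ∨ σ₂ = ComplexEmbedding.conjugate σ₁ := by
  by_contra hcon
  push_neg at hcon
  obtain ⟨h1, h2⟩ := hcon
  have hσ₁ : σ₁ ≠ ComplexEmbedding.conjugate σ₁ := by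
    intro hh
    exact (InfinitePlace.isComplex_mk_iff.mp (hK (InfinitePlace.mk σ₁)))
      (ComplexEmbedding.isReal_iff.mpr hh.symm)
  letI : Algebra F ℂ := (σ₁.comp (algebraMap F K)).toAlgebra
  have halg : (algebraMap F ℂ) = σ₁.comp (algebraMap F K) := rfl
  haveI : FiniteDimensional F K := Module.finite_of_finrank_eq_succ hdeg
  have hτreal : ComplexEmbedding.IsReal (σ₁.comp (algebraMap F K)) :=
    aux_real F hF _
  have hconj : ∀ a : F, (starRingEnd ℂ) (σ₁ (algebraMap F K a)) = σ₁ (algebraMap F K a) := by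
    intro a
    have := congrFun (congrArg DFunLike.coe (ComplexEmbedding.isReal_iff.mp hτreal)) a
    exact this
  -- build three distinct alg homs
  let A₁ : K →ₐ[F] ℂ := { toRingHom := σ₁, commutes' := fun a => rfl }
  let A₂ : K →ₐ[F] ℂ := AlgHom.mk σ₂ (fun a => (congrFun (congrArg DFunLike.coe h.symm) a))
  let A₃ : K →ₐ[F] ℂ := AlgHom.mk (ComplexEmbedding.conjugate σ₁) (fun a => hconj a)
  have hcard : Fintype.card (K →ₐ[F] ℂ) = 2 := by
    rw [AlgHom.card]; exact hdeg
  have h3 : 2 < Fintype.card (K →ₐ[F] ℂ) := by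
    rw [Fintype.two_lt_card_iff]
    refine ⟨A₂, A₁, A₃, ?_, ?_, ?_⟩
    · intro hh; exact h1 (congrArg AlgHom.toRingHom hh)
    · intro hh; exact h2 (congrArg AlgHom.toRingHom hh)
    · intro hh; exact hσ₁ (congrArg AlgHom.toRingHom hh)
  omega

-- ρ acts as complex conjugation under every embedding
lemma aux_rho_conj (F K : Type*) [Field F] [Field K] [NumberField F] [NumberField K] [Algebra F K]
    (hF : ∀ v : InfinitePlace F, v.IsReal)
    (hK : ∀ v : InfinitePlace K, v.IsComplex)
    (hdeg : Module.finrank F K = 2)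
    (ρ : K ≃ₐ[F] K) (hρ : ρ ≠ AlgEquiv.refl)
    (σ : K →+* ℂ) (x : K) : σ (ρ x) = (starRingEnd ℂ) (σ x) := by
  have h : σ.comp (algebraMap F K) = (σ.comp (ρ : K →+* K)).comp (algebraMap F K) := by
    ext a
    simp [ρ.commutes a]
  rcases aux_dichotomy F K hF hK hdeg σ (σ.comp (ρ : K →+* K)) h with h' | h'
  · exfalso
    apply hρ
    ext y
    have := congrFun (congrArg DFunLike.coe h') y
    simp only [RingHom.coe_comp, Function.comp_apply, RingHom.coe_coe] at this
    exact σ.injective this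
  · exact (congrFun (congrArg DFunLike.coe h') x)

lemma aux_signs (F : Type*) [Field F] [NumberField F]
    (hF : ∀ v : InfinitePlace F, v.IsReal) (s : (F →+* ℂ) → ℝ) :
    ∃ a : F, ∀ τ : F →+* ℂ, ‖τ a - (s τ : ℂ)‖ < 1 := by
  classical
  set B := canonicalEmbedding.latticeBasis F with hBdef
  set t : (F →+* ℂ) → ℂ := fun τ => (s τ : ℂ) with ht
  have hBreal : ∀ i τ, (starRingEnd ℂ) (B i τ) = B i τ := by
    intro i τ
    rw [hBdef, canonicalEmbedding.latticeBasis_apply, canonicalEmbedding.apply_at]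
    exact congrFun (congrArg DFunLike.coe
      (ComplexEmbedding.isReal_iff.mp (InfinitePlace.isReal_mk_iff.mp (hF (InfinitePlace.mk τ)))))
      (integralBasis F i)
  set c : Module.Free.ChooseBasisIndex ℤ (𝓞 F) → ℂ := fun i => B.repr t i with hcdef
  have hsum : ∑ i, c i • B i = t := B.sum_repr t
  have hcim : ∀ i, (c i).im = 0 := by
    have h2 : ∑ j, (starRingEnd ℂ) (c j) • B j = t := by
      funext τ
      have h1 := congrFun hsum τ
      rw [Finset.sum_apply] at h1 ⊢
      simp only [Pi.smul_apply, smul_eq_mul] at h1 ⊢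
      calc ∑ j, (starRingEnd ℂ) (c j) * B j τ
          = ∑ j, (starRingEnd ℂ) (c j * B j τ) := by
            refine Finset.sum_congr rfl fun j _ => ?_
            rw [map_mul, hBreal]
        _ = (starRingEnd ℂ) (∑ j, c j * B j τ) := (map_sum _ _ _).symm
        _ = (starRingEnd ℂ) (t τ) := by rw [h1]
        _ = t τ := by rw [ht]; exact Complex.conj_ofReal _
    have e1 : (fun j => (starRingEnd ℂ) (c j)) = c := by
      rw [hcdef]
      conv_rhs => rw [show (fun i => (B.repr t) i) = ⇑(B.repr t) from rfl, ← h2,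
        B.repr_sum_self]
    intro i
    have := congrFun e1 i
    simpa [Complex.ext_iff, neg_eq_iff_add_eq_zero] using this
  set Csum : ℝ := ∑ i, ‖B i‖ with hCs
  have hCnn : (0:ℝ) ≤ Csum := Finset.sum_nonneg fun i _ => norm_nonneg _
  set δ : ℝ := 1 / (Csum + 1) with hδdef
  have hδ : (0:ℝ) < δ := by positivity
  choose q hq using fun i => exists_rat_near ((c i).re) hδ
  refine ⟨∑ i, (q i : ℚ) • integralBasis F i, fun τ => ?_⟩
  have hBiτ : ∀ i, B i τ = τ (integralBasis F i) := by
    intro i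
    rw [hBdef, canonicalEmbedding.latticeBasis_apply, canonicalEmbedding.apply_at]
  have hτa : τ (∑ i, (q i : ℚ) • integralBasis F i) = ∑ i, (q i : ℂ) * B i τ := by
    rw [map_sum]
    refine Finset.sum_congr rfl fun i _ => ?_
    rw [Rat.smul_def, map_mul, map_ratCast, hBiτ]
  have htτ : (s τ : ℂ) = ∑ i, c i * B i τ := by
    have h1 := congrFun hsum τ
    rw [Finset.sum_apply] at h1
    simp only [Pi.smul_apply, smul_eq_mul] at h1
    exact h1.symm
  rw [hτa, htτ, ← Finset.sum_sub_distrib]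
  have : ∀ i, (q i : ℂ) * B i τ - c i * B i τ = ((q i : ℂ) - c i) * B i τ := by
    intro i; ring
  simp_rw [this]
  calc ‖∑ i, ((q i : ℂ) - c i) * B i τ‖
      ≤ ∑ i, ‖((q i : ℂ) - c i) * B i τ‖ := norm_sum_le _ _
    _ ≤ ∑ i, δ * ‖B i‖ := by
        refine Finset.sum_le_sum fun i _ => ?_
        rw [norm_mul]
        have hci : (c i : ℂ) = ((c i).re : ℂ) := by
          rw [Complex.ext_iff]; simp [hcim i]
        have h1 : ‖(q i : ℂ) - c i‖ ≤ δ := by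
          rw [hci, show ((q i : ℂ) - ((c i).re : ℂ)) = (((q i : ℝ) - (c i).re : ℝ) : ℂ) by
            push_cast; ring, Complex.norm_real, Real.norm_eq_abs]
          rw [abs_sub_comm]
          exact le_of_lt (hq i)
        have h2 : ‖B i τ‖ ≤ ‖B i‖ := by
          exact norm_le_pi_norm (B i) τ
        exact mul_le_mul h1 h2 (norm_nonneg _) (le_of_lt hδ)
    _ = δ * Csum := by rw [← Finset.mul_sum]
    _ < 1 := by
        rw [hδdef]
        rw [div_mul_eq_mul_div, div_lt_one (by linarith)]
        linarith


/-- Let `K` be a CM field over the totally real field `F`, with `ρ` the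
nontrivial `F`-automorphism of `K`, and let `Φ` be a CM type of `K`, i.e. a set of complex
embeddings of `K` containing exactly one of each conjugate pair of embeddings. Then there
exists `ζ ∈ K` with `ρ ζ = −ζ` and `Im (σ ζ) > 0` for every `σ ∈ Φ`. -/
theorem exists_totally_imaginary_element_of_CMType
    (F K : Type*) [Field F] [Field K] [NumberField F] [NumberField K] [Algebra F K]
    (hF : ∀ v : InfinitePlace F, v.IsReal)
    (hK : ∀ v : InfinitePlace K, v.IsComplex)
    (hdeg : Module.finrank F K = 2)
    (ρ : K ≃ₐ[F] K) (hρ : ρ ≠ AlgEquiv.refl)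
    (Φ : Set (K →+* ℂ))
    (hΦ : ∀ σ : K →+* ℂ, Xor' (σ ∈ Φ) (NumberField.ComplexEmbedding.conjugate σ ∈ Φ)) :
    ∃ ζ : K, ρ ζ = -ζ ∧ ∀ σ ∈ Φ, 0 < (σ ζ).im := by
  classical
  -- an element moved by ρ
  have hx : ∃ x : K, ρ x ≠ x := by
    by_contra h
    push_neg at h
    exact hρ (AlgEquiv.ext fun y => h y)
  obtain ⟨x, hx⟩ := hx
  set ζ₀ : K := x - ρ x with hζ₀def
  have hζ₀ne : ζ₀ ≠ 0 := sub_ne_zero.mpr (Ne.symm hx)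
  obtain ⟨σ₀⟩ := (inferInstance : Nonempty (K →+* ℂ))
  have hconj : ∀ (σ : K →+* ℂ) (y : K), σ (ρ y) = (starRingEnd ℂ) (σ y) :=
    fun σ y => aux_rho_conj F K hF hK hdeg ρ hρ σ y
  have hρζ₀ : ρ ζ₀ = -ζ₀ := by
    apply σ₀.injective
    rw [hconj σ₀ ζ₀, map_neg, hζ₀def, map_sub, map_sub, hconj σ₀ x]
    simp [Complex.ext_iff]
  have hre : ∀ σ : K →+* ℂ, (σ ζ₀).re = 0 := by
    intro σ
    have h1 : (starRingEnd ℂ) (σ ζ₀) = -(σ ζ₀) := by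
      rw [← hconj σ ζ₀, hρζ₀, map_neg]
    have := congrArg Complex.re h1
    simp only [Complex.conj_re, Complex.neg_re] at this
    linarith
  have him : ∀ σ : K →+* ℂ, (σ ζ₀).im ≠ 0 := by
    intro σ h
    apply hζ₀ne
    apply σ.injective
    rw [map_zero]
    rw [Complex.ext_iff]
    exact ⟨by rw [hre σ, Complex.zero_re], by rw [h, Complex.zero_im]⟩
  -- sign prescription
  set s : (F →+* ℂ) → ℝ := fun τ =>
    if ∃ σ ∈ Φ, σ.comp (algebraMap F K) = τ ∧ 0 < (σ ζ₀).im then 1 else -1 with hsdef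
  obtain ⟨a, ha⟩ := aux_signs F hF s
  refine ⟨algebraMap F K a * ζ₀, ?_, ?_⟩
  · rw [map_mul, hρζ₀, AlgEquiv.commutes, mul_neg]
  · intro σ hσΦ
    set τ : F →+* ℂ := σ.comp (algebraMap F K) with hτdef
    have hτa : τ a = σ (algebraMap F K a) := rfl
    have hkey : ‖σ (algebraMap F K a) - (s τ : ℂ)‖ < 1 := by
      rw [← hτa]; exact ha τ
    have hres : |(σ (algebraMap F K a)).re - s τ| < 1 := by
      calc |(σ (algebraMap F K a)).re - s τ|
          = |(σ (algebraMap F K a) - (s τ : ℂ)).re| := by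
            rw [Complex.sub_re, Complex.ofReal_re]
        _ ≤ ‖σ (algebraMap F K a) - (s τ : ℂ)‖ := Complex.abs_re_le_norm _
        _ < 1 := hkey
    have hmul : (σ (algebraMap F K a * ζ₀)).im = (σ (algebraMap F K a)).re * (σ ζ₀).im := by
      rw [map_mul, Complex.mul_im, hre σ, mul_zero, add_zero]
    rw [hmul]
    rcases lt_or_gt_of_ne (him σ) with hneg | hpos
    · -- Im σ ζ₀ < 0 : show s τ = -1 and Re < 0
      have hsτ : s τ = -1 := by
        rw [hsdef]
        simp only
        rw [if_neg]
        rintro ⟨σ', hσ'Φ, hres', hpos'⟩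
        rcases aux_dichotomy F K hF hK hdeg σ σ' hres'.symm with h' | h'
        · rw [h'] at hpos'; linarith
        · rw [h'] at hσ'Φ
          rcases hΦ σ with ⟨_, hnc⟩ | ⟨_, hnp⟩
          · exact hnc hσ'Φ
          · exact hnp hσΦ
      rw [hsτ] at hres
      have : (σ (algebraMap F K a)).re < 0 := by
        rcases abs_lt.mp hres with ⟨h1, h2⟩
        linarith
      exact mul_pos_of_neg_of_neg this hneg
    · -- Im σ ζ₀ > 0 : s τ = 1 and Re > 0
      have hsτ : s τ = 1 := by
        rw [hsdef]
        simp only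
        rw [if_pos]
        exact ⟨σ, hσΦ, rfl, hpos⟩
      rw [hsτ] at hres
      have : 0 < (σ (algebraMap F K a)).re := by
        rcases abs_lt.mp hres with ⟨h1, h2⟩
        linarith
      exact mul_pos this hpos
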